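/- Positional Filter overlap bound: Let r and s be strictly sorted lists over a linearly ordered type, and suppose a common token t occurs at (1-based) position p in r and position q in s. Then |r ∩ s| ≤ 1 + min(p−1, q−1) + min(|r|−p, |s|−q). -/

import Mathlib

lemma aux_lt_card {α : Type*} [LinearOrder α] (r : List α) (hr : r.Pairwise (· < ·))
    (i : ℕ) (hi : i < r.length) :
    (r.toFinset.filter (· < r[i])).card ≤ i := by
  have hsub : r.toFinset.filter (· < r[i]) ⊆ (r.take i).toFinset := by
    intro x hx
    simp only [Finset.mem_filter, List.mem_toFinset] at hx ⊢
    obtain ⟨hxr, hxlt⟩ := hx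
    obtain ⟨j, hj, hjx⟩ := List.getElem_of_mem hxr
    have hji : j < i := by
      by_contra h
      push_neg at h
      have : r[i] ≤ r[j] := by
        rcases eq_or_lt_of_le h with h' | h'
        · subst h'; exact le_rfl
        · have := hr.sortedLT.strictMono_get (show (⟨i, hi⟩ : Fin r.length) < ⟨j, hj⟩ from h')
          simpa using this.le
      rw [hjx] at this
      exact absurd hxlt (not_lt.mpr this)
    have : (r.take i)[j]'(by rw [List.length_take]; omega) = x := by
      rw [List.getElem_take]; exact hjx
    exact this ▸ List.getElem_mem _
  calc (r.toFinset.filter (· < r[i])).card ≤ (r.take i).toFinset.card :=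
        Finset.card_le_card hsub
    _ ≤ (r.take i).length := (r.take i).toFinset_card_le
    _ ≤ i := by simp

lemma aux_gt_card {α : Type*} [LinearOrder α] (r : List α) (hr : r.Pairwise (· < ·))
    (i : ℕ) (hi : i < r.length) :
    (r.toFinset.filter (r[i] < ·)).card ≤ r.length - (i + 1) := by
  have hsub : r.toFinset.filter (r[i] < ·) ⊆ (r.drop (i + 1)).toFinset := by
    intro x hx
    simp only [Finset.mem_filter, List.mem_toFinset] at hx ⊢
    obtain ⟨hxr, hxgt⟩ := hx
    obtain ⟨j, hj, hjx⟩ := List.getElem_of_mem hxr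
    have hji : i + 1 ≤ j := by
      by_contra h
      push_neg at h
      have : r[j] ≤ r[i] := by
        rcases eq_or_lt_of_le (Nat.lt_succ_iff.mp h) with h' | h'
        · subst h'; exact le_rfl
        · have := hr.sortedLT.strictMono_get (show (⟨j, hj⟩ : Fin r.length) < ⟨i, hi⟩ from h')
          simpa using this.le
      rw [hjx] at this
      exact absurd hxgt (not_lt.mpr this)
    have hjlt : j - (i + 1) < (r.drop (i + 1)).length := by
      simp [List.length_drop]; omega
    have : (r.drop (i + 1))[j - (i + 1)]'hjlt = x := by
      rw [List.getElem_drop]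
      have : i + 1 + (j - (i + 1)) = j := by omega
      simp_rw [this]; exact hjx
    exact this ▸ List.getElem_mem _
  calc (r.toFinset.filter (r[i] < ·)).card ≤ (r.drop (i + 1)).toFinset.card :=
        Finset.card_le_card hsub
    _ ≤ (r.drop (i + 1)).length := (r.drop (i + 1)).toFinset_card_le
    _ ≤ r.length - (i + 1) := by simp

theorem positional_filter_overlap_bound
    {α : Type*} [LinearOrder α] (r s : List α) (p q : ℕ) (t : α)
    (hr : r.Pairwise (· < ·)) (hs : s.Pairwise (· < ·))
    (hp1 : 1 ≤ p) (hq1 : 1 ≤ q)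
    (hp : p - 1 < r.length) (hq : q - 1 < s.length)
    (hrt : r[p - 1] = t) (hst : s[q - 1] = t) :
    (r.toFinset ∩ s.toFinset).card ≤
      1 + min (p - 1) (q - 1) + min (r.length - p) (s.length - q) := by
  set F := r.toFinset ∩ s.toFinset with hF
  have hsub : F ⊆ insert t (F.filter (· < t) ∪ F.filter (t < ·)) := by
    intro x hx
    rcases lt_trichotomy x t with h | h | h
    · exact Finset.mem_insert_of_mem (Finset.mem_union_left _ (Finset.mem_filter.mpr ⟨hx, h⟩))
    · exact h ▸ Finset.mem_insert_self _ _
    · exact Finset.mem_insert_of_mem (Finset.mem_union_right _ (Finset.mem_filter.mpr ⟨hx, h⟩))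
  have hlt : (F.filter (· < t)).card ≤ min (p - 1) (q - 1) := by
    refine le_min ?_ ?_
    · calc (F.filter (· < t)).card ≤ (r.toFinset.filter (· < t)).card :=
            Finset.card_le_card (Finset.filter_subset_filter _ Finset.inter_subset_left)
        _ ≤ p - 1 := hrt ▸ aux_lt_card r hr (p - 1) hp
    · calc (F.filter (· < t)).card ≤ (s.toFinset.filter (· < t)).card :=
            Finset.card_le_card (Finset.filter_subset_filter _ Finset.inter_subset_right)
        _ ≤ q - 1 := hst ▸ aux_lt_card s hs (q - 1) hq
  have hgt : (F.filter (t < ·)).card ≤ min (r.length - p) (s.length - q) := by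
    refine le_min ?_ ?_
    · calc (F.filter (t < ·)).card ≤ (r.toFinset.filter (t < ·)).card :=
            Finset.card_le_card (Finset.filter_subset_filter _ Finset.inter_subset_left)
        _ ≤ r.length - (p - 1 + 1) := hrt ▸ aux_gt_card r hr (p - 1) hp
        _ = r.length - p := by congr 1; omega
    · calc (F.filter (t < ·)).card ≤ (s.toFinset.filter (t < ·)).card :=
            Finset.card_le_card (Finset.filter_subset_filter _ Finset.inter_subset_right)
        _ ≤ s.length - (q - 1 + 1) := hst ▸ aux_gt_card s hs (q - 1) hq
        _ = s.length - q := by congr 1; omega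
  calc F.card ≤ (insert t (F.filter (· < t) ∪ F.filter (t < ·))).card :=
        Finset.card_le_card hsub
    _ ≤ (F.filter (· < t) ∪ F.filter (t < ·)).card + 1 := Finset.card_insert_le _ _
    _ ≤ ((F.filter (· < t)).card + (F.filter (t < ·)).card) + 1 := by
        exact Nat.add_le_add_right (Finset.card_union_le _ _) 1
    _ ≤ 1 + min (p - 1) (q - 1) + min (r.length - p) (s.length - q) := by omega
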